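/- Let ε > 0, let a₁, a₂: Ū → [0,∞) and b₁, b₂: Ū → ℝⁿ be continuous, and let f₁, f₂: U → ℝ be continuous with f₁, f₂ ≥ 0 in U. If z₁, z₂ ∈ C²(U) ∩ C(Ū) satisfy z₁ + b₁(x)·Dz₁ + a₁(x)(z₁ − z₂) − εΔz₁ = f₁ and z₂ + b₂(x)·Dz₂ + a₂(x)(z₂ − z₁) − εΔz₂ = f₂ in U, with z₁ = z₂ = 0 on ∂U, then z₁ ≥ 0 and z₂ ≥ 0 on Ū. -/

import Mathlib

open Set Filter

section AuxLemmas

open Topology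

lemma aux_second_nonneg {φ : ℝ → ℝ} {c r : ℝ} (hr : 0 < r)
    (hd : ∀ t ∈ Ioo (-r) r, DifferentiableAt ℝ φ t)
    (hmin : ∀ t ∈ Ioo (-r) r, φ 0 ≤ φ t)
    (hc : HasDerivAt (deriv φ) c 0) : 0 ≤ c := by
  by_contra hlt
  push_neg at hlt
  have hmem : Ioo (-r) r ∈ 𝓝 (0 : ℝ) := Ioo_mem_nhds (by linarith) hr
  have hloc : IsLocalMin φ 0 := Filter.eventually_of_mem hmem hmin
  have h0 : deriv φ 0 = 0 := hloc.deriv_eq_zero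
  have hslope : Tendsto (slope (deriv φ) 0) (𝓝[≠] 0) (𝓝 c) :=
    hasDerivAt_iff_tendsto_slope.1 hc
  have hslope' : Tendsto (slope (deriv φ) 0) (𝓝[>] 0) (𝓝 c) :=
    hslope.mono_left (nhdsWithin_mono 0 (fun t ht => ne_of_gt ht))
  have hev : ∀ᶠ t in 𝓝[>] (0:ℝ), slope (deriv φ) 0 t < 0 :=
    hslope'.eventually_lt_const hlt
  have hfreq : ∃ᶠ t in 𝓝[>] (0:ℝ), 0 ≤ slope (deriv φ) 0 t := by
    rw [Filter.frequently_iff]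
    intro s hs
    rw [mem_nhdsGT_iff_exists_Ioo_subset] at hs
    obtain ⟨u, hu, hsub⟩ := hs
    have hu0 : (0:ℝ) < u := hu
    set t : ℝ := min u r / 2 with ht_def
    have ht0 : 0 < t := by positivity
    have htu : t < u := by
      have : min u r ≤ u := min_le_left _ _
      simp only [ht_def]; linarith
    have htr : t < r := by
      have : min u r ≤ r := min_le_right _ _
      simp only [ht_def]; linarith
    have hIoo : Ioo (0:ℝ) t ⊆ Ioo (-r) r := fun x hx =>
      ⟨by linarith [hx.1], by linarith [hx.2]⟩
    have hIcc : Icc (0:ℝ) t ⊆ Ioo (-r) r := fun x hx =>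
      ⟨by linarith [hx.1], by linarith [hx.2]⟩
    have hcont : ContinuousOn φ (Icc 0 t) := fun x hx =>
      (hd x (hIcc hx)).continuousAt.continuousWithinAt
    have hdiff : DifferentiableOn ℝ φ (Ioo 0 t) := fun x hx =>
      (hd x (hIoo hx)).differentiableWithinAt
    obtain ⟨ξ, hξ, hderiv⟩ := exists_deriv_eq_slope φ ht0 hcont hdiff
    refine ⟨ξ, hsub ⟨hξ.1, hξ.2.trans htu⟩, ?_⟩
    have hξr : ξ ∈ Ioo (-r) r := hIoo hξ
    have hφt : φ 0 ≤ φ t := hmin t ⟨by linarith, htr⟩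
    have hdnn : 0 ≤ deriv φ ξ := by
      rw [hderiv]
      apply div_nonneg (by linarith) (by linarith)
    rw [slope_def_field, h0]
    simp only [sub_zero]
    exact div_nonneg hdnn (le_of_lt hξ.1)
  obtain ⟨t, ht1, ht2⟩ := (hfreq.and_eventually hev).exists
  linarith

end AuxLemmas

noncomputable def lap {n : ℕ} (u : EuclideanSpace ℝ (Fin n) → ℝ) (x : EuclideanSpace ℝ (Fin n)) : ℝ :=
  ∑ i : Fin n, fderiv ℝ (fun y => fderiv ℝ u y (EuclideanSpace.single i 1)) x
    (EuclideanSpace.single i 1)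

section AuxLemmas2

open Topology

lemma aux_lap_nonneg {n : ℕ} {U : Set (EuclideanSpace ℝ (Fin n))} (hUo : IsOpen U)
    {z : EuclideanSpace ℝ (Fin n) → ℝ} (hz2 : ContDiffOn ℝ 2 z U)
    {x₀ : EuclideanSpace ℝ (Fin n)} (hx₀ : x₀ ∈ U)
    (hmin : ∀ x ∈ U, z x₀ ≤ z x) : 0 ≤ lap z x₀ := by
  obtain ⟨r, hr, hball⟩ := Metric.isOpen_iff.1 hUo x₀ hx₀
  have hzdiff : ∀ y ∈ U, DifferentiableAt ℝ z y := fun y hy =>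
    ((hz2 y hy).contDiffAt (hUo.mem_nhds hy)).differentiableAt two_ne_zero
  apply Finset.sum_nonneg
  intro i _
  set e : EuclideanSpace ℝ (Fin n) := EuclideanSpace.single i 1 with he
  have hnorm : ‖e‖ = 1 := by simp [he, EuclideanSpace.norm_single]
  set L : ℝ → EuclideanSpace ℝ (Fin n) := fun t => x₀ + t • e with hL_def
  have hL0 : L 0 = x₀ := by simp [hL_def]
  have hLmem : ∀ t ∈ Ioo (-r) r, L t ∈ U := by
    intro t ht
    apply hball
    rw [Metric.mem_ball, hL_def]
    simp only [dist_eq_norm, add_sub_cancel_left, norm_smul, hnorm, mul_one,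
      Real.norm_eq_abs]
    exact abs_lt.2 ⟨ht.1, ht.2⟩
  have hL : ∀ t : ℝ, HasDerivAt L e t := by
    intro t
    have h1 : HasDerivAt (fun s : ℝ => s • e) ((1:ℝ) • e) t :=
      (hasDerivAt_id t).smul_const e
    simpa [hL_def, one_smul] using h1.const_add x₀
  set φ : ℝ → ℝ := fun t => z (L t) with hφ_def
  set g : EuclideanSpace ℝ (Fin n) → ℝ := fun y => fderiv ℝ z y e with hg_def
  have hφd : ∀ t ∈ Ioo (-r) r, HasDerivAt φ (g (L t)) t := by
    intro t ht
    exact ((hzdiff (L t) (hLmem t ht)).hasFDerivAt).comp_hasDerivAt t (hL t)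
  have hderiv_eq : deriv φ =ᶠ[𝓝 (0:ℝ)] fun t => g (L t) := by
    filter_upwards [Ioo_mem_nhds (by linarith : -r < (0:ℝ)) hr] with t ht
    exact (hφd t ht).deriv
  have hg_diff : DifferentiableAt ℝ g x₀ := by
    have h2 : ContDiffAt ℝ 2 z x₀ := (hz2 x₀ hx₀).contDiffAt (hUo.mem_nhds hx₀)
    have h1 : ContDiffAt ℝ 1 (fderiv ℝ z) x₀ := h2.fderiv_right (by norm_num)
    exact (h1.differentiableAt one_ne_zero).clm_apply (differentiableAt_const e)
  have hc : HasDerivAt (deriv φ) (fderiv ℝ g x₀ e) 0 := by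
    have hgfd : HasFDerivAt g (fderiv ℝ g x₀) (L 0) := hL0 ▸ hg_diff.hasFDerivAt
    have hgL : HasDerivAt (g ∘ L) (fderiv ℝ g x₀ e) 0 := hgfd.comp_hasDerivAt 0 (hL 0)
    exact hgL.congr_of_eventuallyEq (by simpa [Function.comp_def] using hderiv_eq)
  have hkey : 0 ≤ fderiv ℝ g x₀ e :=
    aux_second_nonneg hr
      (fun t ht => (hφd t ht).differentiableAt)
      (fun t ht => by
        simp only [hφ_def, hL0]
        exact hL0 ▸ hmin (L t) (hLmem t ht))
      hc
  exact hkey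

lemma aux_key {n : ℕ} {U : Set (EuclideanSpace ℝ (Fin n))} (hUo : IsOpen U)
    {ε : ℝ} (hε : 0 < ε)
    {a f z w : EuclideanSpace ℝ (Fin n) → ℝ} {b : EuclideanSpace ℝ (Fin n) → EuclideanSpace ℝ (Fin n)}
    (hz2 : ContDiffOn ℝ 2 z U) {x₀ : EuclideanSpace ℝ (Fin n)} (hx₀ : x₀ ∈ U)
    (hmin : ∀ x ∈ U, z x₀ ≤ z x) (hw : z x₀ ≤ w x₀) (ha : 0 ≤ a x₀) (hf : 0 ≤ f x₀)
    (hpde : z x₀ + (inner ℝ (b x₀) (gradient z x₀) : ℝ) + a x₀ * (z x₀ - w x₀) - ε * lap z x₀ = f x₀) :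
    0 ≤ z x₀ := by
  have hdiff : DifferentiableAt ℝ z x₀ :=
    ((hz2 x₀ hx₀).contDiffAt (hUo.mem_nhds hx₀)).differentiableAt two_ne_zero
  have hloc : IsLocalMin z x₀ := Filter.eventually_of_mem (hUo.mem_nhds hx₀) hmin
  have hfd : fderiv ℝ z x₀ = 0 := hloc.fderiv_eq_zero
  have hgrad : gradient z x₀ = 0 := by
    rw [gradient, hfd, map_zero]
  have hinner : (inner ℝ (b x₀) (gradient z x₀) : ℝ) = 0 := by
    rw [hgrad, inner_zero_right]
  have hlap : 0 ≤ lap z x₀ := aux_lap_nonneg hUo hz2 hx₀ hmin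
  have h1 : a x₀ * (z x₀ - w x₀) ≤ 0 := mul_nonpos_of_nonneg_of_nonpos ha (by linarith)
  nlinarith [mul_nonneg hε.le hlap]

end AuxLemmas2

theorem stmt_16
    {n : ℕ} (hn : 2 ≤ n)
    (U : Set (EuclideanSpace ℝ (Fin n))) (hUo : IsOpen U) (hUb : Bornology.IsBounded U)
    (ε : ℝ) (hε : 0 < ε)
    (a₁ a₂ : EuclideanSpace ℝ (Fin n) → ℝ) (ha₁c : ContinuousOn a₁ (closure U)) (ha₂c : ContinuousOn a₂ (closure U))
    (ha₁ : ∀ x ∈ closure U, 0 ≤ a₁ x) (ha₂ : ∀ x ∈ closure U, 0 ≤ a₂ x)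
    (b₁ b₂ : EuclideanSpace ℝ (Fin n) → EuclideanSpace ℝ (Fin n)) (hb₁ : ContinuousOn b₁ (closure U)) (hb₂ : ContinuousOn b₂ (closure U))
    (f₁ f₂ : EuclideanSpace ℝ (Fin n) → ℝ) (hf₁c : ContinuousOn f₁ U) (hf₂c : ContinuousOn f₂ U)
    (hf₁ : ∀ x ∈ U, 0 ≤ f₁ x) (hf₂ : ∀ x ∈ U, 0 ≤ f₂ x)
    (z₁ z₂ : EuclideanSpace ℝ (Fin n) → ℝ)
    (hz₁2 : ContDiffOn ℝ 2 z₁ U) (hz₁c : ContinuousOn z₁ (closure U))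
    (hz₂2 : ContDiffOn ℝ 2 z₂ U) (hz₂c : ContinuousOn z₂ (closure U))
    (hpde₁ : ∀ x ∈ U,
      z₁ x + (inner ℝ (b₁ x) (gradient z₁ x) : ℝ) + a₁ x * (z₁ x - z₂ x) - ε * lap z₁ x = f₁ x)
    (hpde₂ : ∀ x ∈ U,
      z₂ x + (inner ℝ (b₂ x) (gradient z₂ x) : ℝ) + a₂ x * (z₂ x - z₁ x) - ε * lap z₂ x = f₂ x)
    (hzb₁ : ∀ x ∈ frontier U, z₁ x = 0) (hzb₂ : ∀ x ∈ frontier U, z₂ x = 0) :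
    ∀ x ∈ closure U, 0 ≤ z₁ x ∧ 0 ≤ z₂ x := by
  intro x hx
  have hKc : IsCompact (closure U) := hUb.isCompact_closure
  have hne : (closure U).Nonempty := ⟨x, hx⟩
  set g : EuclideanSpace ℝ (Fin n) → ℝ := fun y => min (z₁ y) (z₂ y) with hg_def
  have hgc : ContinuousOn g (closure U) := hz₁c.inf' hz₂c
  obtain ⟨x₀, hx₀K, hmin⟩ := hKc.exists_isMinOn hne hgc
  have hmin' : ∀ y ∈ closure U, g x₀ ≤ g y := fun y hy => hmin hy
  suffices hpos : 0 ≤ g x₀ by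
    have h1 : g x₀ ≤ g x := hmin' x hx
    constructor
    · exact le_trans (le_trans hpos h1) (min_le_left _ _)
    · exact le_trans (le_trans hpos h1) (min_le_right _ _)
  by_contra hneg
  push_neg at hneg
  have hU0 : x₀ ∈ U := by
    by_contra h
    have hfr : x₀ ∈ frontier U := by
      rw [frontier, hUo.interior_eq]
      exact ⟨hx₀K, h⟩
    have h1 := hzb₁ x₀ hfr
    have h2 := hzb₂ x₀ hfr
    simp [hg_def, h1, h2] at hneg
  rcases le_total (z₁ x₀) (z₂ x₀) with hc | hc
  · have hgeq : g x₀ = z₁ x₀ := min_eq_left hc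
    have hm : ∀ y ∈ U, z₁ x₀ ≤ z₁ y := fun y hy =>
      le_trans (hgeq ▸ hmin' y (subset_closure hy)) (min_le_left _ _)
    have := aux_key hUo hε hz₁2 hU0 hm hc (ha₁ x₀ hx₀K) (hf₁ x₀ hU0) (hpde₁ x₀ hU0)
    linarith [hgeq ▸ this]
  · have hgeq : g x₀ = z₂ x₀ := min_eq_right hc
    have hm : ∀ y ∈ U, z₂ x₀ ≤ z₂ y := fun y hy =>
      le_trans (hgeq ▸ hmin' y (subset_closure hy)) (min_le_right _ _)
    have := aux_key hUo hε hz₂2 hU0 hm hc (ha₂ x₀ hx₀K) (hf₂ x₀ hU0) (hpde₂ x₀ hU0)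
    linarith [hgeq ▸ this]
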